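/- Let K be an odd positive integer and let γ : {0,…,K} → [0,1] satisfy γ(l) ≥ γ(l+1) for every integer 0 ≤ l ≤ (K−1)/2 and γ(l) ≤ γ(l+1) for every integer (K+1)/2 ≤ l ≤ K−1. Then the function H : [0,1] → ℝ defined by H(β) = 1/2 + (1/2) Σ_{l=(K+1)/2}^{K} γ(l)·C(K,l) β^l (1−β)^{K−l} − (1/2) Σ_{l=0}^{(K−1)/2} γ(l)·C(K,l) β^l (1−β)^{K−l} is nondecreasing on [0,1]. (H(β) is the probability that DaRRM with noise function γ outputs 1 when the K mechanisms are i.i.d. with success probability β; hence the privacy cost objective f(p,p';γ) = H(p)/H(p') − 1 is maximized when p ≥ p'.) -/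

import Mathlib

open Finset

/-- The probability that DaRRM with noise function `γ` outputs 1 when the `K`
i.i.d. binary mechanisms each succeed with probability `β`. -/
noncomputable def Hfun (K : ℕ) (γ : ℕ → ℝ) (β : ℝ) : ℝ :=
  1 / 2
  + (1 / 2) * (∑ l ∈ Finset.Icc ((K + 1) / 2) K,
      γ l * (K.choose l : ℝ) * β ^ l * (1 - β) ^ (K - l))
  - (1 / 2) * ∑ l ∈ Finset.range ((K + 1) / 2),
      γ l * (K.choose l : ℝ) * β ^ l * (1 - β) ^ (K - l)

/-- under the monotonicity assumption on `γ`, the output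
probability `H` of DaRRM is nondecreasing on `[0,1]`. -/
theorem statement10 (K : ℕ) (hK : Odd K) (hKpos : 0 < K)
    (γ : ℕ → ℝ) (hγ01 : ∀ l ≤ K, 0 ≤ γ l ∧ γ l ≤ 1)
    (hmono1 : ∀ l ≤ (K - 1) / 2, γ (l + 1) ≤ γ l)
    (hmono2 : ∀ l, (K + 1) / 2 ≤ l → l ≤ K - 1 → γ l ≤ γ (l + 1)) :
    MonotoneOn (Hfun K γ) (Set.Icc 0 1) := by
  obtain ⟨t, ht⟩ := hK
  set m : ℕ := (K + 1) / 2 with hm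
  have hmt : m = t + 1 := by omega
  set g : ℕ → ℝ := fun l => if l < m then -γ l else γ l with hg
  -- Rewrite Hfun as a single Bernstein-type sum
  have hH : Hfun K γ = fun β : ℝ => 1 / 2
      + (1 / 2) * ∑ l ∈ Finset.range (K + 1),
          g l * (K.choose l : ℝ) * β ^ l * (1 - β) ^ (K - l) := by
    funext β
    have hsplit : ∑ l ∈ Finset.range (K + 1), g l * (K.choose l : ℝ) * β ^ l * (1 - β) ^ (K - l)
        = (∑ l ∈ Finset.Icc m K, γ l * (K.choose l : ℝ) * β ^ l * (1 - β) ^ (K - l))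
          - ∑ l ∈ Finset.range m, γ l * (K.choose l : ℝ) * β ^ l * (1 - β) ^ (K - l) := by
      rw [Finset.range_eq_Ico,
        ← Finset.sum_Ico_consecutive _ (Nat.zero_le m) (by omega : m ≤ K + 1),
        Finset.Ico_add_one_right_eq_Icc, ← Finset.range_eq_Ico]
      have h1 : ∑ l ∈ Finset.range m, g l * (K.choose l : ℝ) * β ^ l * (1 - β) ^ (K - l)
          = -∑ l ∈ Finset.range m, γ l * (K.choose l : ℝ) * β ^ l * (1 - β) ^ (K - l) := by
        rw [← Finset.sum_neg_distrib]
        refine Finset.sum_congr rfl fun l hl => ?_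
        have : l < m := Finset.mem_range.mp hl
        simp only [hg, if_pos this]; ring
      have h2 : ∑ l ∈ Finset.Icc m K, g l * (K.choose l : ℝ) * β ^ l * (1 - β) ^ (K - l)
          = ∑ l ∈ Finset.Icc m K, γ l * (K.choose l : ℝ) * β ^ l * (1 - β) ^ (K - l) := by
        refine Finset.sum_congr rfl fun l hl => ?_
        have : ¬ l < m := by
          have := (Finset.mem_Icc.mp hl).1; omega
        simp only [hg, if_neg this]
      rw [h1, h2]; ring
    simp only [Hfun, hsplit]; ring
  -- derivative of each term
  have hterm : ∀ (l : ℕ) (β : ℝ),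
      HasDerivAt (fun b : ℝ => g l * (K.choose l : ℝ) * b ^ l * (1 - b) ^ (K - l))
        (g l * (K.choose l : ℝ) * ((l : ℝ) * β ^ (l - 1) * (1 - β) ^ (K - l))
          - g l * (K.choose l : ℝ) * (((K - l : ℕ) : ℝ) * β ^ l * (1 - β) ^ (K - l - 1))) β := by
    intro l β
    have h1 : HasDerivAt (fun b : ℝ => b ^ l) ((l : ℝ) * β ^ (l - 1)) β := hasDerivAt_pow l β
    have h2 : HasDerivAt (fun b : ℝ => (1 - b) ^ (K - l))
        (-(((K - l : ℕ) : ℝ) * (1 - β) ^ (K - l - 1))) β := by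
      have hinner : HasDerivAt (fun b : ℝ => 1 - b) (-1) β := (hasDerivAt_id β).const_sub 1
      have := (hasDerivAt_pow (K - l) (1 - β)).comp β hinner
      exact this.congr_deriv (by ring)
    have := (h1.mul h2).const_mul (g l * (K.choose l : ℝ))
    have hf : (fun b : ℝ => g l * (K.choose l : ℝ) * b ^ l * (1 - b) ^ (K - l))
        = (fun y => g l * (K.choose l : ℝ) * ((fun b : ℝ => b ^ l) * fun b : ℝ => (1 - b) ^ (K - l)) y) := by
      funext b; simp only [Pi.mul_apply]; ring
    rw [hf]; exact this.congr_deriv (by ring)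
  -- derivative of Hfun
  have hderiv : ∀ β : ℝ, HasDerivAt (Hfun K γ)
      ((1 / 2) * ∑ l ∈ Finset.range (K + 1),
        (g l * (K.choose l : ℝ) * ((l : ℝ) * β ^ (l - 1) * (1 - β) ^ (K - l))
          - g l * (K.choose l : ℝ) * (((K - l : ℕ) : ℝ) * β ^ l * (1 - β) ^ (K - l - 1)))) β := by
    intro β
    rw [hH]
    exact ((HasDerivAt.fun_sum fun l _ => hterm l β).const_mul (1 / 2)).const_add (1 / 2)
  -- value of the derivative sum
  have hval : ∀ β : ℝ,
      ∑ l ∈ Finset.range (K + 1),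
        (g l * (K.choose l : ℝ) * ((l : ℝ) * β ^ (l - 1) * (1 - β) ^ (K - l))
          - g l * (K.choose l : ℝ) * (((K - l : ℕ) : ℝ) * β ^ l * (1 - β) ^ (K - l - 1)))
      = ∑ j ∈ Finset.range K,
          (g (j + 1) - g j) * ((K * (K - 1).choose j : ℕ) : ℝ) * (β ^ j * (1 - β) ^ (K - 1 - j)) := by
    intro β
    rw [Finset.sum_sub_distrib, Finset.sum_range_succ', Finset.sum_range_succ]
    have hz1 : g 0 * (K.choose 0 : ℝ) * ((0 : ℕ) * β ^ (0 - 1) * (1 - β) ^ (K - 0)) = 0 := by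
      simp
    have hz2 : g K * (K.choose K : ℝ) * (((K - K : ℕ) : ℝ) * β ^ K * (1 - β) ^ (K - K - 1)) = 0 := by
      simp
    rw [hz1, hz2, add_zero, add_zero, ← Finset.sum_sub_distrib]
    refine Finset.sum_congr rfl fun j hj => ?_
    have hjK : j < K := Finset.mem_range.mp hj
    have e1 : K.choose (j + 1) * (j + 1) = K * (K - 1).choose j := by
      have h := Nat.add_one_mul_choose_eq (K - 1) j
      have hK1 : K - 1 + 1 = K := by omega
      simp only [Nat.succ_eq_add_one, hK1] at h
      exact h.symm
    have e2 : K.choose j * (K - j) = K * (K - 1).choose j := by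
      rw [← Nat.choose_succ_right_eq]; exact e1
    have c1 : (K.choose (j + 1) : ℝ) * ((j : ℝ) + 1) = ((K * (K - 1).choose j : ℕ) : ℝ) := by
      exact_mod_cast e1
    have c2 : (K.choose j : ℝ) * (((K - j : ℕ)) : ℝ) = ((K * (K - 1).choose j : ℕ) : ℝ) := by
      exact_mod_cast e2
    push_cast at c1 c2
    rw [show j + 1 - 1 = j from rfl, show K - (j + 1) = K - 1 - j from by omega,
      show K - j - 1 = K - 1 - j from by omega]
    push_cast
    linear_combination (g (j + 1) * (β ^ j * (1 - β) ^ (K - 1 - j))) * c1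
      - (g j * (β ^ j * (1 - β) ^ (K - 1 - j))) * c2
  -- nonnegativity of the derivative on (0,1)
  have hnonneg : ∀ β : ℝ, 0 ≤ β → β ≤ 1 →
      0 ≤ ∑ j ∈ Finset.range K,
        (g (j + 1) - g j) * ((K * (K - 1).choose j : ℕ) : ℝ) * (β ^ j * (1 - β) ^ (K - 1 - j)) := by
    intro β hβ0 hβ1
    refine Finset.sum_nonneg fun j hj => ?_
    have hjK : j < K := Finset.mem_range.mp hj
    have hgd : 0 ≤ g (j + 1) - g j := by
      by_cases h1 : j + 1 < m
      · have hle : j ≤ (K - 1) / 2 := by omega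
        have := hmono1 j hle
        simp only [hg, if_pos h1, if_pos (by omega : j < m)]
        linarith
      · by_cases h2 : j + 1 = m
        · have hjm : j < m := by omega
          have hγ1 : 0 ≤ γ (j + 1) := (hγ01 (j + 1) (by omega)).1
          have hγ2 : 0 ≤ γ j := (hγ01 j (by omega)).1
          simp only [hg, if_neg (by omega : ¬ j + 1 < m), if_pos hjm]
          linarith
        · have hjm : m ≤ j := by omega
          have := hmono2 j (by omega) (by omega)
          simp only [hg, if_neg (by omega : ¬ j + 1 < m), if_neg (by omega : ¬ j < m)]
          linarith
    have hc : (0 : ℝ) ≤ ((K * (K - 1).choose j : ℕ) : ℝ) := by positivity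
    have hp : 0 ≤ β ^ j * (1 - β) ^ (K - 1 - j) := by
      have := pow_nonneg hβ0 j
      have := pow_nonneg (by linarith : (0:ℝ) ≤ 1 - β) (K - 1 - j)
      positivity
    positivity
  -- conclude
  apply monotoneOn_of_deriv_nonneg (convex_Icc 0 1)
  · exact fun x _ => (hderiv x).continuousAt.continuousWithinAt
  · intro x hx
    exact (hderiv x).differentiableAt.differentiableWithinAt
  · intro x hx
    rw [interior_Icc] at hx
    rw [(hderiv x).deriv, hval x]
    have := hnonneg x (le_of_lt hx.1) (le_of_lt hx.2)
    linarith
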